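/- The channel max-relative entropy is additive under tensor products: for E₁,E₂ trace-preserving completely positive maps and F₁,F₂ completely positive maps, D_max(E₁⊗E₂ ‖ F₁⊗F₂) = D_max(E₁‖F₁) + D_max(E₂‖F₂). -/

import Mathlib

open Matrix BigOperators
open scoped ComplexOrder Classical
noncomputable section
namespace QIT
variable {n m : Type*}

def Dmax [Fintype n] (ρ σ : Matrix n n ℂ) : EReal :=
  sInf ((fun l : ℝ => (l : EReal)) '' {l : ℝ | ((2:ℝ) ^ l • σ - ρ).PosSemidef})

def matLog [Fintype n] [DecidableEq n] (A : Matrix n n ℂ) : Matrix n n ℂ :=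
  if h : A.IsHermitian then
    (h.eigenvectorUnitary : Matrix n n ℂ) *
      Matrix.diagonal (fun i => (Real.log (h.eigenvalues i) : ℂ)) *
      (star (h.eigenvectorUnitary : Matrix n n ℂ))
  else 0

def mpow [Fintype n] [DecidableEq n] (A : Matrix n n ℂ) (p : ℝ) : Matrix n n ℂ :=
  if h : A.IsHermitian then
    (h.eigenvectorUnitary : Matrix n n ℂ) *
      Matrix.diagonal (fun i => ((h.eigenvalues i ^ p : ℝ) : ℂ)) *
      (star (h.eigenvectorUnitary : Matrix n n ℂ))
  else 0

def msqrt [Fintype n] [DecidableEq n] (A : Matrix n n ℂ) : Matrix n n ℂ :=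
  if h : A.PosSemidef then
    (h.1.eigenvectorUnitary : Matrix n n ℂ) *
      Matrix.diagonal ((↑) ∘ (fun x : ℝ => Real.sqrt x) ∘ h.1.eigenvalues) *
      (star (h.1.eigenvectorUnitary : Matrix n n ℂ))
  else 0

def SuppLE [Fintype n] (ρ σ : Matrix n n ℂ) : Prop :=
  ∀ v, σ.mulVec v = 0 → ρ.mulVec v = 0

def relEntR [Fintype n] [DecidableEq n] (ρ σ : Matrix n n ℂ) : ℝ :=
  ((ρ * (matLog ρ - matLog σ)).trace).re

def relEnt [Fintype n] [DecidableEq n] (ρ σ : Matrix n n ℂ) : EReal :=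
  if SuppLE ρ σ then ((relEntR ρ σ : ℝ) : EReal) else ⊤

def IsDensity [Fintype n] (ρ : Matrix n n ℂ) : Prop := ρ.PosSemidef ∧ ρ.trace = 1

def matTensorMap {k : Type*} (Φ : Matrix n n ℂ → Matrix m m ℂ)
    (M : Matrix (k × n) (k × n) ℂ) : Matrix (k × m) (k × m) ℂ :=
  fun p q => Φ (fun a b => M (p.1, a) (q.1, b)) p.2 q.2

def matTensorMapLeft {k : Type*} (Φ : Matrix n n ℂ → Matrix m m ℂ)
    (M : Matrix (n × k) (n × k) ℂ) : Matrix (m × k) (m × k) ℂ :=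
  fun p q => Φ (fun a b => M (a, p.2) (b, q.2)) p.1 q.1

def IsCP [Fintype n] [Fintype m] (Φ : Matrix n n ℂ →ₗ[ℂ] Matrix m m ℂ) : Prop :=
  ∀ (k : ℕ) (M : Matrix (Fin k × n) (Fin k × n) ℂ), M.PosSemidef →
    (matTensorMap (⇑Φ) M).PosSemidef

def IsTP [Fintype n] [Fintype m] (Φ : Matrix n n ℂ →ₗ[ℂ] Matrix m m ℂ) : Prop :=
  ∀ M, (Φ M).trace = M.trace

def DmaxChan [Fintype n] [Fintype m] (E F : Matrix n n ℂ →ₗ[ℂ] Matrix m m ℂ) : EReal :=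
  ⨆ φ : {φ : Matrix (n × n) (n × n) ℂ // IsDensity φ},
    Dmax (matTensorMap (⇑E) φ.1) (matTensorMap (⇑F) φ.1)

def DChan [Fintype n] [DecidableEq n] [Fintype m] [DecidableEq m]
    (E F : Matrix n n ℂ →ₗ[ℂ] Matrix m m ℂ) : EReal :=
  ⨆ φ : {φ : Matrix (n × n) (n × n) ℂ // IsDensity φ},
    relEnt (matTensorMap (⇑E) φ.1) (matTensorMap (⇑F) φ.1)

def DAmort [Fintype n] [DecidableEq n] [Fintype m] [DecidableEq m]
    (E F : Matrix n n ℂ →ₗ[ℂ] Matrix m m ℂ) : EReal :=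
  ⨆ r : ℕ, ⨆ φ : {φ : Matrix (Fin r × n) (Fin r × n) ℂ // IsDensity φ},
    ⨆ ω : {ω : Matrix (Fin r × n) (Fin r × n) ℂ // IsDensity ω},
      relEnt (matTensorMap (⇑E) φ.1) (matTensorMap (⇑F) ω.1) - relEnt φ.1 ω.1

def traceNorm [Fintype n] [DecidableEq n] (A : Matrix n n ℂ) : ℝ :=
  ((msqrt (Aᴴ * A)).trace).re

def genFid [Fintype n] [DecidableEq n] (ρ σ : Matrix n n ℂ) : ℝ :=
  (traceNorm (msqrt ρ * msqrt σ) +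
    Real.sqrt ((1 - ρ.trace.re) * (1 - σ.trace.re))) ^ 2

def pdist [Fintype n] [DecidableEq n] (ρ σ : Matrix n n ℂ) : ℝ :=
  Real.sqrt (1 - genFid ρ σ)

def tensorPow [Fintype n] (ρ : Matrix n n ℂ) (k : ℕ) :
    Matrix (Fin k → n) (Fin k → n) ℂ :=
  fun v w => ∏ i, ρ (v i) (w i)

def chanPow [Fintype n] [DecidableEq n] [Fintype m]
    (E : Matrix n n ℂ →ₗ[ℂ] Matrix m m ℂ) (k : ℕ)
    (M : Matrix (Fin k → n) (Fin k → n) ℂ) : Matrix (Fin k → m) (Fin k → m) ℂ :=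
  fun v w => ∑ x : Fin k → n, ∑ y : Fin k → n,
    (∏ i, E (Matrix.single (x i) (y i) 1) (v i) (w i)) * M x y


/-- The tensor product `Φ₁ ⊗ Φ₂` of two maps on matrices, obtained as
`(Φ₁ ⊗ id) ∘ (id ⊗ Φ₂)`. -/
def tensorChan {n₁ n₂ m₁ m₂ : Type*}
    (Φ₁ : Matrix n₁ n₁ ℂ → Matrix m₁ m₁ ℂ) (Φ₂ : Matrix n₂ n₂ ℂ → Matrix m₂ m₂ ℂ)
    (M : Matrix (n₁ × n₂) (n₁ × n₂) ℂ) : Matrix (m₁ × m₂) (m₁ × m₂) ℂ :=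
  matTensorMapLeft Φ₁ (matTensorMap Φ₂ M)


section AdditivityAux

open Kronecker

/-! ### EReal helpers -/

private lemma ereal_le_coe_of_forall_lt {a : EReal} {c : ℝ}
    (h : ∀ x : ℝ, (x : EReal) < a → x ≤ c) : a ≤ (c : EReal) := by
  by_contra hc
  obtain ⟨x, hx1, hx2⟩ := EReal.lt_iff_exists_real_btwn.mp (not_le.mp hc)
  have hcx : c < x := by exact_mod_cast hx1
  exact absurd (h x hx2) (not_le.mpr hcx)

/-! ### Basic API for `Dmax` -/

private lemma Dmax_le_of_mem [Fintype n] {ρ σ : Matrix n n ℂ} {l : ℝ}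
    (h : ((2:ℝ) ^ l • σ - ρ).PosSemidef) : Dmax ρ σ ≤ (l : EReal) :=
  sInf_le ⟨l, h, rfl⟩

private lemma le_Dmax [Fintype n] {ρ σ : Matrix n n ℂ} {a : EReal}
    (h : ∀ l : ℝ, ((2:ℝ) ^ l • σ - ρ).PosSemidef → a ≤ (l : EReal)) : a ≤ Dmax ρ σ :=
  le_sInf (by rintro x ⟨l, hl, rfl⟩; exact h l hl)

private lemma not_psd_of_lt_Dmax [Fintype n] {ρ σ : Matrix n n ℂ} {l : ℝ}
    (h : (l : EReal) < Dmax ρ σ) : ¬ ((2:ℝ) ^ l • σ - ρ).PosSemidef :=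
  fun hf => absurd (Dmax_le_of_mem hf) (not_le.mpr h)

/-! ### Outer products and decompositions -/

private def outer [Fintype n] (v : n → ℂ) : Matrix n n ℂ :=
  Matrix.of fun i j => star (v i) * v j

private lemma outer_posSemidef [Fintype n] (v : n → ℂ) : (outer v).PosSemidef := by
  refine Matrix.PosSemidef.of_dotProduct_mulVec_nonneg ?_ ?_
  · ext i j
    simp [outer, Matrix.conjTranspose_apply, mul_comm]
  · intro x
    have h : dotProduct (star x) ((outer v) *ᵥ x) = star (v ⬝ᵥ x) * (v ⬝ᵥ x) := by
      simp only [dotProduct, Matrix.mulVec, outer, Matrix.of_apply, Pi.star_apply,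
        dotProduct, Finset.mul_sum, Finset.sum_mul, star_sum, star_mul']
      rw [Finset.sum_comm]
      refine Finset.sum_congr rfl fun i _ => Finset.sum_congr rfl fun j _ => ?_
      ring
    rw [h]
    exact star_mul_self_nonneg _

open scoped MatrixOrder in
private lemma psd_eq_ct_mul [Fintype n] {A : Matrix n n ℂ} (hA : A.PosSemidef) :
    ∃ B : Matrix n n ℂ, A = Bᴴ * B := by
  classical
  obtain ⟨X, hX, -, rfl⟩ := CFC.exists_sqrt_of_isSelfAdjoint_of_quasispectrumRestricts
    hA.isHermitian (QuasispectrumRestricts.nnreal_of_nonneg hA.nonneg)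
  exact ⟨X, by rw [← Matrix.star_eq_conjTranspose, hX.star_eq]⟩

private lemma exists_sum_outer [Fintype n] {A : Matrix n n ℂ} (hA : A.PosSemidef) :
    ∃ v : n → n → ℂ, A = ∑ i, outer (v i) := by
  obtain ⟨B, hB⟩ := psd_eq_ct_mul hA
  refine ⟨fun i => B i, ?_⟩
  ext p q
  simp [hB, Matrix.mul_apply, outer, Matrix.sum_apply, Matrix.conjTranspose_apply]

private lemma posSemidef_sum {ι : Type*} [Fintype n] (s : Finset ι) {f : ι → Matrix n n ℂ}
    (h : ∀ i ∈ s, (f i).PosSemidef) : (∑ i ∈ s, f i).PosSemidef := by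
  classical
  induction s using Finset.induction_on with
  | empty => simpa using Matrix.PosSemidef.zero
  | @insert a s ha ih =>
      rw [Finset.sum_insert ha]
      exact (h a (Finset.mem_insert_self a s)).add
        (ih fun i hi => h i (Finset.mem_insert_of_mem hi))

/-! ### Choi matrices -/

private def choi [Fintype n] [Fintype m] (E : Matrix n n ℂ →ₗ[ℂ] Matrix m m ℂ) :
    Matrix (n × m) (n × m) ℂ :=
  Matrix.of fun p q => E (Matrix.single p.1 q.1 1) p.2 q.2

private lemma matTensorMap_apply [Fintype n] [Fintype m] (E : Matrix n n ℂ →ₗ[ℂ] Matrix m m ℂ)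
    {k : Type*} (M : Matrix (k × n) (k × n) ℂ) (i i' : k) (c c' : m) :
    matTensorMap (⇑E) M (i, c) (i', c') =
      ∑ a, ∑ b, M (i, a) (i', b) * choi E (a, c) (b, c') := by
  show E (Matrix.of fun a b => M (i, a) (i', b)) c c' = _
  have h1 : (Matrix.of fun a b => M (i, a) (i', b) : Matrix n n ℂ)
      = ∑ a, ∑ b, M (i, a) (i', b) • Matrix.single a b (1:ℂ) := by
    conv_lhs => rw [Matrix.matrix_eq_sum_single
      (Matrix.of fun a b => M (i, a) (i', b) : Matrix n n ℂ)]
    refine Finset.sum_congr rfl fun a _ => Finset.sum_congr rfl fun b _ => ?_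
    rw [Matrix.smul_single, smul_eq_mul, mul_one]
    rfl
  rw [h1, map_sum]
  simp only [map_sum, LinearMap.map_smul, Matrix.sum_apply, Matrix.smul_apply, smul_eq_mul]
  rfl

private lemma kron_conjTranspose {a b c d : Type*} (A : Matrix a b ℂ) (B : Matrix c d ℂ) :
    (A ⊗ₖ B)ᴴ = Aᴴ ⊗ₖ Bᴴ := by
  ext ⟨i, j⟩ ⟨i', j'⟩
  simp [Matrix.conjTranspose_apply, star_mul', mul_comm]

private lemma posSemidef_kron {a b : Type*} [Fintype a] [Fintype b]
    {A : Matrix a a ℂ} {B : Matrix b b ℂ}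
    (hA : A.PosSemidef) (hB : B.PosSemidef) : (A ⊗ₖ B).PosSemidef := by
  obtain ⟨C, rfl⟩ := psd_eq_ct_mul hA
  obtain ⟨D, rfl⟩ := psd_eq_ct_mul hB
  rw [Matrix.mul_kronecker_mul, ← kron_conjTranspose]
  exact Matrix.posSemidef_conjTranspose_mul_self _

private lemma conj_psd [Fintype n] [Fintype m] {J : Matrix (n × m) (n × m) ℂ}
    (hJ : J.PosSemidef) {k : Type*} [Fintype k] (X : Matrix k n ℂ) :
    (Matrix.of fun (p q : k × m) =>
      ∑ a, ∑ b, X p.1 a * J (a, p.2) (b, q.2) * star (X q.1 b)).PosSemidef := by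
  have key : (Matrix.of fun (p q : k × m) =>
        ∑ a, ∑ b, X p.1 a * J (a, p.2) (b, q.2) * star (X q.1 b))
      = (X ⊗ₖ (1 : Matrix m m ℂ)) * J * (X ⊗ₖ (1 : Matrix m m ℂ))ᴴ := by
    ext ⟨i, c⟩ ⟨i', c'⟩
    show _ = ((X ⊗ₖ (1 : Matrix m m ℂ)) * J * (X ⊗ₖ (1 : Matrix m m ℂ))ᴴ) (i, c) (i', c')
    simp only [Matrix.mul_apply, Matrix.conjTranspose_apply, Matrix.kroneckerMap_apply,
      Matrix.one_apply, star_mul', apply_ite (star : ℂ → ℂ), star_zero, star_one,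
      mul_ite, mul_one, mul_zero, ite_mul, zero_mul, one_mul,
      Fintype.sum_prod_type, Finset.sum_ite_eq, Finset.sum_ite_eq', Finset.mem_univ, if_true,
      Matrix.of_apply]
    rw [Finset.sum_comm]
    exact Finset.sum_congr rfl fun a _ => (Finset.sum_mul _ _ _).symm
  rw [key]
  exact hJ.mul_mul_conjTranspose_same _

private lemma sum_comm₃ {ι κ τ : Type*} [Fintype ι] [Fintype κ] [Fintype τ]
    (f : ι → κ → τ → ℂ) :
    ∑ a, ∑ b, ∑ t, f a b t = ∑ t, ∑ a, ∑ b, f a b t :=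
  (Finset.sum_congr rfl fun _ _ => Finset.sum_comm).trans Finset.sum_comm

private lemma matTensorMap_sum [Fintype n] [Fintype m] (E : Matrix n n ℂ →ₗ[ℂ] Matrix m m ℂ)
    {k : Type*} [Fintype k] {ι : Type*} [Fintype ι] (M : ι → Matrix (k × n) (k × n) ℂ) :
    matTensorMap (⇑E) (∑ t, M t) = ∑ t, matTensorMap (⇑E) (M t) := by
  ext ⟨i, c⟩ ⟨i', c'⟩
  simp only [Matrix.sum_apply, matTensorMap_apply, Finset.sum_mul]
  exact sum_comm₃ fun a b t => M t (i, a) (i', b) * choi E (a, c) (b, c')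

private lemma matTensorMap_outer [Fintype n] [Fintype m] (E : Matrix n n ℂ →ₗ[ℂ] Matrix m m ℂ)
    (w : n × n → ℂ) :
    matTensorMap (⇑E) (outer w) = Matrix.of fun (p q : n × m) =>
      ∑ a, ∑ b, star (w (p.1, a)) * choi E (a, p.2) (b, q.2) * w (q.1, b) := by
  ext ⟨i, c⟩ ⟨i', c'⟩
  rw [matTensorMap_apply]
  refine Finset.sum_congr rfl fun a _ => Finset.sum_congr rfl fun b _ => ?_
  simp only [outer, Matrix.of_apply]
  ring

private lemma feasible_transfer [Fintype n] [Fintype m]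
    (E F : Matrix n n ℂ →ₗ[ℂ] Matrix m m ℂ) {l : ℝ}
    (h : ((2:ℝ) ^ l • choi F - choi E).PosSemidef)
    {φ : Matrix (n × n) (n × n) ℂ} (hφ : φ.PosSemidef) :
    ((2:ℝ) ^ l • matTensorMap (⇑F) φ - matTensorMap (⇑E) φ).PosSemidef := by
  obtain ⟨v, hv⟩ := exists_sum_outer hφ
  have key : (2:ℝ) ^ l • matTensorMap (⇑F) φ - matTensorMap (⇑E) φ
      = ∑ t : n × n, Matrix.of fun (p q : n × m) =>
          ∑ a, ∑ b, (Matrix.of fun i a => star (v t (i, a))) p.1 a *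
            ((2:ℝ) ^ l • choi F - choi E) (a, p.2) (b, q.2) *
            star ((Matrix.of fun i a => star (v t (i, a))) q.1 b) := by
    rw [hv, matTensorMap_sum, matTensorMap_sum, Finset.smul_sum, ← Finset.sum_sub_distrib]
    refine Finset.sum_congr rfl fun t _ => ?_
    rw [matTensorMap_outer, matTensorMap_outer]
    ext ⟨i, c⟩ ⟨i', c'⟩
    simp only [Matrix.sub_apply, Matrix.smul_apply, Matrix.of_apply, Finset.smul_sum,
      ← Finset.sum_sub_distrib, star_star]
    refine Finset.sum_congr rfl fun a _ => Finset.sum_congr rfl fun b _ => ?_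
    simp only [Matrix.sub_apply, Matrix.smul_apply, Complex.real_smul]
    ring
  rw [key]
  exact posSemidef_sum _ fun t _ => conj_psd h _

/-! ### The maximally entangled state -/

private def mes (n : Type*) [Fintype n] : Matrix (n × n) (n × n) ℂ :=
  outer (fun p => if p.1 = p.2 then 1 else 0)

private lemma matTensorMap_mes [Fintype n] [Fintype m] (E : Matrix n n ℂ →ₗ[ℂ] Matrix m m ℂ) :
    matTensorMap (⇑E) (mes n) = choi E := by
  ext ⟨i, c⟩ ⟨i', c'⟩
  rw [mes, matTensorMap_apply]
  have : ∀ a b : n, outer (fun p : n × n => if p.1 = p.2 then (1:ℂ) else 0) (i, a) (i', b)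
      = (if i = a then (1:ℂ) else 0) * (if i' = b then (1:ℂ) else 0) := by
    intro a b
    simp only [outer, Matrix.of_apply]
    by_cases h1 : i = a <;> by_cases h2 : i' = b <;> simp [h1, h2]
  simp only [this, ite_mul, one_mul, zero_mul, mul_ite, mul_zero, mul_one]
  simp [Finset.sum_ite_eq, Finset.sum_ite_eq']

private lemma mes_trace (n : Type*) [Fintype n] : (mes n).trace = (Fintype.card n : ℂ) := by
  rw [Matrix.trace]
  have : ∀ p : n × n, Matrix.diag (mes n) p = if p.1 = p.2 then (1:ℂ) else 0 := by
    rintro ⟨i, j⟩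
    by_cases h : i = j <;> simp [Matrix.diag, mes, outer, h]
  rw [Finset.sum_congr rfl fun p _ => this p, Fintype.sum_prod_type]
  simp [Finset.sum_ite_eq, Finset.card_univ]

private lemma posSemidef_rsmul [Fintype n] {A : Matrix n n ℂ} (hA : A.PosSemidef) {r : ℝ}
    (hr : 0 ≤ r) : (r • A).PosSemidef := by
  refine Matrix.PosSemidef.of_dotProduct_mulVec_nonneg ?_ ?_
  · ext i j
    simp only [Matrix.conjTranspose_apply, Matrix.smul_apply, star_smul, star_trivial]
    rw [← Matrix.conjTranspose_apply, hA.1]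
  · intro x
    have h1 : star x ⬝ᵥ (r • A) *ᵥ x = r • (star x ⬝ᵥ A *ᵥ x) := by
      rw [Matrix.smul_mulVec, dotProduct_smul]
    rw [h1, Complex.real_smul]
    exact mul_nonneg (Complex.zero_le_real.mpr hr) (hA.dotProduct_mulVec_nonneg x)

private lemma matTensorMap_rsmul [Fintype n] [Fintype m] (E : Matrix n n ℂ →ₗ[ℂ] Matrix m m ℂ)
    {k : Type*} (r : ℝ) (M : Matrix (k × n) (k × n) ℂ) :
    matTensorMap (⇑E) (r • M) = r • matTensorMap (⇑E) M := by
  ext ⟨i, c⟩ ⟨i', c'⟩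
  show E (Matrix.of fun a b => (r • M) (i, a) (i', b)) c c' = _
  have h1 : (Matrix.of fun a b => (r • M) (i, a) (i', b) : Matrix n n ℂ)
      = ((r : ℂ)) • Matrix.of fun a b => M (i, a) (i', b) := by
    ext a b
    simp [Complex.real_smul]
  rw [h1, LinearMap.map_smul]
  show ((r : ℂ) • E (Matrix.of fun a b => M (i, a) (i', b))) c c'
      = (r • matTensorMap (⇑E) M) (i, c) (i', c')
  simp only [Matrix.smul_apply, Complex.real_smul, smul_eq_mul]
  rfl

private lemma mes_density (n : Type*) [Fintype n] [Nonempty n] :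
    IsDensity (((Fintype.card n : ℝ))⁻¹ • mes n) := by
  constructor
  · exact posSemidef_rsmul (outer_posSemidef _) (by positivity)
  · rw [Matrix.trace_smul, mes_trace, Complex.real_smul]
    have hc : (0:ℝ) < (Fintype.card n : ℝ) := by
      exact_mod_cast Fintype.card_pos
    push_cast
    field_simp

/-! ### Dmax invariances -/

private lemma Dmax_rsmul [Fintype n] (ρ σ : Matrix n n ℂ) {c : ℝ} (hc : 0 < c) :
    Dmax (c • ρ) (c • σ) = Dmax ρ σ := by
  unfold Dmax
  have hset : {l : ℝ | ((2:ℝ) ^ l • (c • σ) - c • ρ).PosSemidef}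
      = {l : ℝ | ((2:ℝ) ^ l • σ - ρ).PosSemidef} := by
    ext l
    have heq : (2:ℝ) ^ l • (c • σ) - c • ρ = c • ((2:ℝ) ^ l • σ - ρ) := by
      rw [smul_sub, smul_comm]
    simp only [Set.mem_setOf_eq, heq]
    constructor
    · intro h
      have := posSemidef_rsmul h (le_of_lt (inv_pos.mpr hc))
      rwa [smul_smul, inv_mul_cancel₀ (ne_of_gt hc), one_smul] at this
    · intro h
      exact posSemidef_rsmul h hc.le
  rw [hset]

private lemma Dmax_submatrix {k : Type*} [Fintype n] [Fintype k] (e : k ≃ n)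
    (ρ σ : Matrix n n ℂ) :
    Dmax (ρ.submatrix ⇑e ⇑e) (σ.submatrix ⇑e ⇑e) = Dmax ρ σ := by
  unfold Dmax
  have hset : {l : ℝ | ((2:ℝ) ^ l • σ.submatrix ⇑e ⇑e - ρ.submatrix ⇑e ⇑e).PosSemidef}
      = {l : ℝ | ((2:ℝ) ^ l • σ - ρ).PosSemidef} := by
    ext l
    have heq : (2:ℝ) ^ l • σ.submatrix ⇑e ⇑e - ρ.submatrix ⇑e ⇑e
        = ((2:ℝ) ^ l • σ - ρ).submatrix ⇑e ⇑e := by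
      ext i j; simp
    rw [Set.mem_setOf_eq, Set.mem_setOf_eq, heq, Matrix.posSemidef_submatrix_equiv]
  rw [hset]

/-! ### `DmaxChan` via Choi matrices -/

private lemma DmaxChan_le_choi [Fintype n] [Fintype m]
    (E F : Matrix n n ℂ →ₗ[ℂ] Matrix m m ℂ) :
    DmaxChan E F ≤ Dmax (choi E) (choi F) := by
  apply iSup_le
  rintro ⟨φ, hφ⟩
  exact le_Dmax fun l hl => Dmax_le_of_mem (feasible_transfer E F hl hφ.1)

private lemma DmaxChan_eq_choi [Fintype n] [Fintype m] [Nonempty n]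
    (E F : Matrix n n ℂ →ₗ[ℂ] Matrix m m ℂ) :
    DmaxChan E F = Dmax (choi E) (choi F) := by
  refine le_antisymm (DmaxChan_le_choi E F) ?_
  have hc : (0:ℝ) < ((Fintype.card n : ℝ))⁻¹ := by
    have : (0:ℝ) < (Fintype.card n : ℝ) := by exact_mod_cast Fintype.card_pos
    positivity
  have h1 : Dmax (choi E) (choi F)
      = Dmax (matTensorMap (⇑E) (((Fintype.card n : ℝ))⁻¹ • mes n))
          (matTensorMap (⇑F) (((Fintype.card n : ℝ))⁻¹ • mes n)) := by
    rw [matTensorMap_rsmul, matTensorMap_rsmul, matTensorMap_mes, matTensorMap_mes,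
      Dmax_rsmul _ _ hc]
  rw [h1]
  exact le_iSup (fun φ : {φ : Matrix (n × n) (n × n) ℂ // IsDensity φ} =>
    Dmax (matTensorMap (⇑E) φ.1) (matTensorMap (⇑F) φ.1)) ⟨_, mes_density n⟩

/-! ### Quadratic forms -/

private lemma quad_conj [Fintype n] {A : Matrix n n ℂ} (hA : A.IsHermitian) (v : n → ℂ) :
    star (star v ⬝ᵥ A *ᵥ v) = star v ⬝ᵥ A *ᵥ v := by
  have h1 : star (star v ⬝ᵥ A *ᵥ v) = star (A *ᵥ v) ⬝ᵥ star (star v) :=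
    (Matrix.star_dotProduct_star _ _).symm
  rw [h1, star_star, Matrix.star_mulVec, ← Matrix.dotProduct_mulVec, hA.eq]

private lemma quad_real [Fintype n] {A : Matrix n n ℂ} (hA : A.IsHermitian) (v : n → ℂ) :
    star v ⬝ᵥ A *ᵥ v = (((star v ⬝ᵥ A *ᵥ v).re : ℝ) : ℂ) :=
  (Complex.conj_eq_iff_re.mp (quad_conj hA v)).symm

private lemma quad_re_nonneg [Fintype n] {A : Matrix n n ℂ} (hA : A.PosSemidef) (v : n → ℂ) :
    0 ≤ (star v ⬝ᵥ A *ᵥ v).re :=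
  (Complex.le_def.mp (hA.dotProduct_mulVec_nonneg v)).1

private lemma exists_neg_quad [Fintype n] {A : Matrix n n ℂ} (hherm : A.IsHermitian)
    (h : ¬ A.PosSemidef) : ∃ v, (star v ⬝ᵥ A *ᵥ v).re < 0 := by
  rw [Matrix.posSemidef_iff_dotProduct_mulVec, not_and] at h
  have h2 := h hherm
  push_neg at h2
  obtain ⟨v, hv⟩ := h2
  refine ⟨v, ?_⟩
  by_contra hc
  push_neg at hc
  refine hv ?_
  rw [quad_real hherm v]
  exact Complex.zero_le_real.mpr hc

private lemma herm_comb [Fintype n] {ρ σ : Matrix n n ℂ} (hρ : ρ.IsHermitian)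
    (hσ : σ.IsHermitian) (r : ℝ) : (r • σ - ρ).IsHermitian := by
  have h1 : (r • σ).IsHermitian := by
    ext i j
    simp only [Matrix.conjTranspose_apply, Matrix.smul_apply, star_smul, star_trivial]
    rw [← Matrix.conjTranspose_apply, hσ]
  exact h1.sub hρ

private lemma quad_sub_smul [Fintype n] (ρ σ : Matrix n n ℂ) (r : ℝ) (v : n → ℂ) :
    (star v ⬝ᵥ (r • σ - ρ) *ᵥ v).re = r * (star v ⬝ᵥ σ *ᵥ v).re - (star v ⬝ᵥ ρ *ᵥ v).re := by
  rw [Matrix.sub_mulVec, Matrix.smul_mulVec, dotProduct_sub, dotProduct_smul]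
  rw [Complex.sub_re]
  congr 1
  rw [Complex.real_smul, Complex.mul_re, Complex.ofReal_re, Complex.ofReal_im]
  ring

private lemma quad_kron {α β : Type*} [Fintype α] [Fintype β]
    (X : Matrix α α ℂ) (Y : Matrix β β ℂ) (v : α → ℂ) (w : β → ℂ) :
    star (fun p : α × β => v p.1 * w p.2) ⬝ᵥ (X ⊗ₖ Y) *ᵥ (fun p : α × β => v p.1 * w p.2)
      = (star v ⬝ᵥ X *ᵥ v) * (star w ⬝ᵥ Y *ᵥ w) := by
  simp only [dotProduct, Matrix.mulVec, Pi.star_apply, star_mul', Fintype.sum_prod_type,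
    Matrix.kroneckerMap_apply, dotProduct]
  rw [Finset.sum_mul_sum]
  refine Finset.sum_congr rfl fun a _ => Finset.sum_congr rfl fun b _ => ?_
  simp_rw [Finset.mul_sum, Finset.sum_mul]
  rw [Finset.sum_comm]
  refine Finset.sum_congr rfl fun c _ => Finset.sum_congr rfl fun d _ => by ring

/-! ### Traces -/

private lemma trace_re_nonneg [Fintype n] {A : Matrix n n ℂ} (hA : A.PosSemidef) :
    0 ≤ A.trace.re := by
  rw [Matrix.trace, Complex.re_sum]
  refine Finset.sum_nonneg fun i _ => ?_
  have h : star (Pi.single i 1 : n → ℂ) ⬝ᵥ A *ᵥ Pi.single i 1 = A i i := by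
    simp [dotProduct, Matrix.mulVec_single, Pi.single_apply, apply_ite (star : ℂ → ℂ)]
  have := quad_re_nonneg hA (Pi.single i 1)
  rwa [h] at this

private lemma trace_re_comb [Fintype n] (ρ σ : Matrix n n ℂ) (r : ℝ) :
    (r • σ - ρ).trace.re = r * σ.trace.re - ρ.trace.re := by
  rw [Matrix.trace_sub, Matrix.trace_smul, Complex.sub_re]
  congr 1
  rw [Complex.real_smul, Complex.mul_re, Complex.ofReal_re, Complex.ofReal_im]
  ring

private lemma bot_lt_Dmax [Fintype n] {ρ σ : Matrix n n ℂ} (hρ : ρ.PosSemidef)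
    (ht : 0 < ρ.trace.re) : (⊥ : EReal) < Dmax ρ σ := by
  by_cases hne : ∃ l : ℝ, ((2:ℝ) ^ l • σ - ρ).PosSemidef
  · obtain ⟨l₀, hl₀⟩ := hne
    have h0 := trace_re_nonneg hl₀
    rw [trace_re_comb] at h0
    have hp0 : (0:ℝ) < (2:ℝ) ^ l₀ := Real.rpow_pos_of_pos two_pos l₀
    have hσt : 0 < σ.trace.re := by nlinarith
    set b : ℝ := Real.logb 2 (ρ.trace.re / σ.trace.re) with hb
    refine lt_of_lt_of_le (EReal.bot_lt_coe b) (le_Dmax fun l hl => ?_)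
    have h1 := trace_re_nonneg hl
    rw [trace_re_comb] at h1
    have h2 : ρ.trace.re / σ.trace.re ≤ (2:ℝ) ^ l := by
      rw [div_le_iff₀ hσt]; nlinarith
    have h3 : b ≤ l := by
      rw [hb, Real.logb_le_iff_le_rpow one_lt_two (by positivity)]
      exact h2
    exact_mod_cast h3
  · push_neg at hne
    have htop : (⊤ : EReal) ≤ Dmax ρ σ := le_Dmax fun l hl => absurd hl (hne l)
    exact lt_of_lt_of_le bot_lt_top htop

private lemma ereal_le_coe_of_forall_pos {a : EReal} {c : ℝ}
    (h : ∀ ε : ℝ, 0 < ε → a ≤ ((c + ε : ℝ) : EReal)) : a ≤ (c : EReal) := by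
  apply ereal_le_coe_of_forall_lt
  intro x hx
  by_contra hxc
  push_neg at hxc
  have h2 := h ((x - c)/2) (by linarith)
  have h3 : (x : EReal) ≤ ((c + (x - c)/2 : ℝ) : EReal) := le_trans hx.le h2
  have h4 : x ≤ c + (x - c)/2 := by exact_mod_cast h3
  linarith

/-! ### Additivity of `Dmax` for Kronecker products -/

private lemma Dmax_kron_add {α β : Type*} [Fintype α] [Fintype β]
    {ρ₁ σ₁ : Matrix α α ℂ} {ρ₂ σ₂ : Matrix β β ℂ}
    (hρ₁ : ρ₁.PosSemidef) (hρ₂ : ρ₂.PosSemidef)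
    (hσ₁ : σ₁.PosSemidef) (hσ₂ : σ₂.PosSemidef)
    (ht₁ : 0 < ρ₁.trace.re) (ht₂ : 0 < ρ₂.trace.re) :
    Dmax (ρ₁ ⊗ₖ ρ₂) (σ₁ ⊗ₖ σ₂) = Dmax ρ₁ σ₁ + Dmax ρ₂ σ₂ := by
  have hbot₁ : (⊥:EReal) < Dmax ρ₁ σ₁ := bot_lt_Dmax hρ₁ ht₁
  have hbot₂ : (⊥:EReal) < Dmax ρ₂ σ₂ := bot_lt_Dmax hρ₂ ht₂
  have feas : ∀ l₁ l₂ : ℝ, ((2:ℝ)^l₁ • σ₁ - ρ₁).PosSemidef →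
      ((2:ℝ)^l₂ • σ₂ - ρ₂).PosSemidef →
      ((2:ℝ)^(l₁+l₂) • (σ₁ ⊗ₖ σ₂) - ρ₁ ⊗ₖ ρ₂).PosSemidef := by
    intro l₁ l₂ h₁ h₂
    have key : (2:ℝ)^(l₁+l₂) • (σ₁ ⊗ₖ σ₂) - ρ₁ ⊗ₖ ρ₂
        = ((2:ℝ)^l₁ • σ₁ - ρ₁) ⊗ₖ ((2:ℝ)^l₂ • σ₂) + ρ₁ ⊗ₖ ((2:ℝ)^l₂ • σ₂ - ρ₂) := by
      ext ⟨a, b⟩ ⟨c, d⟩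
      simp only [Matrix.add_apply, Matrix.sub_apply, Matrix.smul_apply,
        Matrix.kroneckerMap_apply, Complex.real_smul, Real.rpow_add two_pos,
        Complex.ofReal_mul]
      ring
    rw [key]
    have hs2 : ((2:ℝ)^l₂ • σ₂).PosSemidef := by
      have h3 := h₂.add hρ₂
      rwa [sub_add_cancel] at h3
    exact (posSemidef_kron h₁ hs2).add (posSemidef_kron hρ₁ h₂)
  have sep : ∀ l x₁ x₂ : ℝ, ((2:ℝ)^l • (σ₁ ⊗ₖ σ₂) - ρ₁ ⊗ₖ ρ₂).PosSemidef →
      ¬((2:ℝ)^x₁ • σ₁ - ρ₁).PosSemidef → ¬((2:ℝ)^x₂ • σ₂ - ρ₂).PosSemidef →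
      x₁ + x₂ ≤ l := by
    intro l x₁ x₂ hl h₁ h₂
    obtain ⟨v, hv⟩ := exists_neg_quad (herm_comb hρ₁.1 hσ₁.1 _) h₁
    obtain ⟨w, hw⟩ := exists_neg_quad (herm_comb hρ₂.1 hσ₂.1 _) h₂
    rw [quad_sub_smul] at hv hw
    set a₁ := (star v ⬝ᵥ ρ₁ *ᵥ v).re with ha₁def
    set b₁ := (star v ⬝ᵥ σ₁ *ᵥ v).re with hb₁def
    set a₂ := (star w ⬝ᵥ ρ₂ *ᵥ w).re with ha₂def
    set b₂ := (star w ⬝ᵥ σ₂ *ᵥ w).re with hb₂def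
    have ha₁ : 0 ≤ a₁ := quad_re_nonneg hρ₁ v
    have hb₁ : 0 ≤ b₁ := quad_re_nonneg hσ₁ v
    have ha₂ : 0 ≤ a₂ := quad_re_nonneg hρ₂ w
    have hb₂ : 0 ≤ b₂ := quad_re_nonneg hσ₂ w
    have hquad := quad_re_nonneg hl (fun p : α × β => v p.1 * w p.2)
    rw [quad_sub_smul, quad_kron, quad_kron] at hquad
    have hρq : ((star v ⬝ᵥ ρ₁ *ᵥ v) * (star w ⬝ᵥ ρ₂ *ᵥ w)).re = a₁ * a₂ := by
      rw [quad_real hρ₁.1 v, quad_real hρ₂.1 w, ← ha₁def, ← ha₂def, ← Complex.ofReal_mul,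
        Complex.ofReal_re]
    have hσq : ((star v ⬝ᵥ σ₁ *ᵥ v) * (star w ⬝ᵥ σ₂ *ᵥ w)).re = b₁ * b₂ := by
      rw [quad_real hσ₁.1 v, quad_real hσ₂.1 w, ← hb₁def, ← hb₂def, ← Complex.ofReal_mul,
        Complex.ofReal_re]
    rw [hρq, hσq] at hquad
    have h2l : (0:ℝ) < (2:ℝ)^l := Real.rpow_pos_of_pos two_pos l
    have hx₁p : (0:ℝ) < (2:ℝ)^x₁ := Real.rpow_pos_of_pos two_pos x₁
    have hx₂p : (0:ℝ) < (2:ℝ)^x₂ := Real.rpow_pos_of_pos two_pos x₂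
    have ha₁p : 0 < a₁ := by nlinarith [mul_nonneg hx₁p.le hb₁]
    have ha₂p : 0 < a₂ := by nlinarith [mul_nonneg hx₂p.le hb₂]
    have hbb : 0 < b₁ * b₂ := by
      rcases lt_or_eq_of_le (mul_nonneg hb₁ hb₂) with hcase | hcase
      · exact hcase
      · exfalso
        have hz : (2:ℝ)^l * (b₁ * b₂) = 0 := by rw [← hcase, mul_zero]
        nlinarith [mul_pos ha₁p ha₂p]
    have hprod : ((2:ℝ)^x₁ * b₁) * ((2:ℝ)^x₂ * b₂) < a₁ * a₂ :=
      mul_lt_mul'' (by linarith) (by linarith) (mul_nonneg hx₁p.le hb₁)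
        (mul_nonneg hx₂p.le hb₂)
    have hlt : (2:ℝ)^(x₁+x₂) < (2:ℝ)^l := by
      rw [Real.rpow_add two_pos]
      have heq : (2:ℝ)^x₁ * (2:ℝ)^x₂ * (b₁ * b₂) = ((2:ℝ)^x₁ * b₁) * ((2:ℝ)^x₂ * b₂) := by
        ring
      have h5 : (2:ℝ)^x₁ * (2:ℝ)^x₂ * (b₁ * b₂) < (2:ℝ)^l * (b₁ * b₂) := by
        rw [heq]; linarith
      exact (mul_lt_mul_iff_of_pos_right hbb).mp h5
    exact le_of_lt ((Real.rpow_lt_rpow_left_iff one_lt_two).mp hlt)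
  refine le_antisymm ?_ ?_
  · by_cases h₁ : ∃ l : ℝ, ((2:ℝ)^l • σ₁ - ρ₁).PosSemidef
    · by_cases h₂ : ∃ l : ℝ, ((2:ℝ)^l • σ₂ - ρ₂).PosSemidef
      · obtain ⟨l₁, hl₁⟩ := h₁
        obtain ⟨l₂, hl₂⟩ := h₂
        have hD₁top : Dmax ρ₁ σ₁ ≠ ⊤ :=
          ne_top_of_le_ne_top (EReal.coe_ne_top l₁) (Dmax_le_of_mem hl₁)
        have hD₂top : Dmax ρ₂ σ₂ ≠ ⊤ :=
          ne_top_of_le_ne_top (EReal.coe_ne_top l₂) (Dmax_le_of_mem hl₂)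
        set d₁ := (Dmax ρ₁ σ₁).toReal with hd₁def
        set d₂ := (Dmax ρ₂ σ₂).toReal with hd₂def
        have hd₁ : Dmax ρ₁ σ₁ = (d₁ : EReal) :=
          (EReal.coe_toReal hD₁top (ne_of_gt hbot₁)).symm
        have hd₂ : Dmax ρ₂ σ₂ = (d₂ : EReal) :=
          (EReal.coe_toReal hD₂top (ne_of_gt hbot₂)).symm
        rw [hd₁, hd₂, ← EReal.coe_add]
        apply ereal_le_coe_of_forall_pos
        intro ε hε
        have hlt₁ : Dmax ρ₁ σ₁ < ((d₁ + ε/2 : ℝ) : EReal) := by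
          rw [hd₁]; exact_mod_cast (by linarith : d₁ < d₁ + ε/2)
        have hlt₂ : Dmax ρ₂ σ₂ < ((d₂ + ε/2 : ℝ) : EReal) := by
          rw [hd₂]; exact_mod_cast (by linarith : d₂ < d₂ + ε/2)
        obtain ⟨y₁, hy₁, hy₁lt⟩ := sInf_lt_iff.mp hlt₁
        obtain ⟨l₁', hl₁', rfl⟩ := hy₁
        obtain ⟨y₂, hy₂, hy₂lt⟩ := sInf_lt_iff.mp hlt₂
        obtain ⟨l₂', hl₂', rfl⟩ := hy₂
        have hfeas := feas l₁' l₂' hl₁' hl₂'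
        refine le_trans (Dmax_le_of_mem hfeas) ?_
        have hc₁ : l₁' < d₁ + ε/2 := by
          have : (l₁' : EReal) < ((d₁ + ε/2 : ℝ) : EReal) := hy₁lt
          exact_mod_cast this
        have hc₂ : l₂' < d₂ + ε/2 := by
          have : (l₂' : EReal) < ((d₂ + ε/2 : ℝ) : EReal) := hy₂lt
          exact_mod_cast this
        exact_mod_cast (by linarith : l₁' + l₂' ≤ d₁ + d₂ + ε)
      · push_neg at h₂
        have htop : Dmax ρ₂ σ₂ = ⊤ :=
          top_le_iff.mp (le_Dmax fun l hl => absurd hl (h₂ l))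
        rw [htop, EReal.add_top_of_ne_bot (ne_of_gt hbot₁)]
        exact le_top
    · push_neg at h₁
      have htop : Dmax ρ₁ σ₁ = ⊤ :=
        top_le_iff.mp (le_Dmax fun l hl => absurd hl (h₁ l))
      rw [htop, EReal.top_add_of_ne_bot (ne_of_gt hbot₂)]
      exact le_top
  · apply le_Dmax
    intro l hl
    have step : ∀ x₁ x₂ : ℝ, (x₁:EReal) < Dmax ρ₁ σ₁ → (x₂:EReal) < Dmax ρ₂ σ₂ →
        x₁ + x₂ ≤ l := fun x₁ x₂ hx₁ hx₂ =>
      sep l x₁ x₂ hl (not_psd_of_lt_Dmax hx₁) (not_psd_of_lt_Dmax hx₂)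
    obtain ⟨x₂0, _, hx₂b⟩ := EReal.lt_iff_exists_real_btwn.mp hbot₂
    have hD₁le : Dmax ρ₁ σ₁ ≤ ((l - x₂0 : ℝ) : EReal) :=
      ereal_le_coe_of_forall_lt (fun x₁ hx₁ => by linarith [step x₁ x₂0 hx₁ hx₂b])
    have hD₁top : Dmax ρ₁ σ₁ ≠ ⊤ := ne_top_of_le_ne_top (EReal.coe_ne_top _) hD₁le
    set d₁ := (Dmax ρ₁ σ₁).toReal with hd₁def
    have hd₁ : Dmax ρ₁ σ₁ = (d₁ : EReal) := (EReal.coe_toReal hD₁top (ne_of_gt hbot₁)).symm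
    have hD₂le : Dmax ρ₂ σ₂ ≤ ((l - d₁ : ℝ) : EReal) := by
      apply ereal_le_coe_of_forall_lt
      intro x₂ hx₂
      have hεbound : ∀ ε : ℝ, 0 < ε → x₂ ≤ l - d₁ + ε := by
        intro ε hε
        have hlt : ((d₁ - ε : ℝ) : EReal) < Dmax ρ₁ σ₁ := by
          rw [hd₁]; exact_mod_cast (by linarith : d₁ - ε < d₁)
        linarith [step (d₁ - ε) x₂ hlt hx₂]
      by_contra hc
      push_neg at hc
      linarith [hεbound ((x₂ - (l - d₁))/2) (by linarith)]
    calc Dmax ρ₁ σ₁ + Dmax ρ₂ σ₂ ≤ (d₁ : EReal) + ((l - d₁ : ℝ) : EReal) := by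
          rw [hd₁]; exact add_le_add le_rfl hD₂le
      _ = (l : EReal) := by rw [← EReal.coe_add]; norm_num

/-! ### Choi matrices of tensor-product channels -/

private lemma choi_tensor {n₁ n₂ m₁ m₂ : Type*}
    [Fintype n₁] [Fintype n₂] [Fintype m₁] [Fintype m₂]
    (E₁ : Matrix n₁ n₁ ℂ →ₗ[ℂ] Matrix m₁ m₁ ℂ) (E₂ : Matrix n₂ n₂ ℂ →ₗ[ℂ] Matrix m₂ m₂ ℂ)
    (E₁₂ : Matrix (n₁ × n₂) (n₁ × n₂) ℂ →ₗ[ℂ] Matrix (m₁ × m₂) (m₁ × m₂) ℂ)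
    (h : ∀ M, E₁₂ M = tensorChan (⇑E₁) (⇑E₂) M) :
    choi E₁₂ = (choi E₁ ⊗ₖ choi E₂).submatrix
      (⇑(Equiv.prodProdProdComm n₁ n₂ m₁ m₂)) (⇑(Equiv.prodProdProdComm n₁ n₂ m₁ m₂)) := by
  ext ⟨⟨a₁, a₂⟩, c₁, c₂⟩ ⟨⟨b₁, b₂⟩, d₁, d₂⟩
  have hL : choi E₁₂ ((a₁, a₂), (c₁, c₂)) ((b₁, b₂), (d₁, d₂))
      = E₁₂ (Matrix.single (a₁, a₂) (b₁, b₂) 1) (c₁, c₂) (d₁, d₂) := by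
    unfold choi
    simp only [Matrix.of_apply]
    congr!
  rw [hL, h]
  have hL2 : tensorChan (⇑E₁) (⇑E₂) (Matrix.single (a₁, a₂) (b₁, b₂) 1) (c₁, c₂) (d₁, d₂)
      = E₁ (Matrix.of fun x y =>
        matTensorMap (⇑E₂) (Matrix.single (a₁, a₂) (b₁, b₂) 1) (x, c₂) (y, d₂)) c₁ d₁ := rfl
  rw [hL2]
  have hinner : ∀ x y : n₁,
      matTensorMap (⇑E₂) (Matrix.single (a₁, a₂) (b₁, b₂) (1:ℂ)) (x, c₂) (y, d₂)
        = (if x = a₁ ∧ y = b₁ then (1:ℂ) else 0) * choi E₂ (a₂, c₂) (b₂, d₂) := by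
    intro x y
    have hL3 : matTensorMap (⇑E₂) (Matrix.single (a₁, a₂) (b₁, b₂) (1:ℂ)) (x, c₂) (y, d₂)
        = E₂ (Matrix.of fun a b =>
          Matrix.single (a₁, a₂) (b₁, b₂) (1:ℂ) (x, a) (y, b)) c₂ d₂ := rfl
    rw [hL3]
    have harg : (Matrix.of fun a b =>
          Matrix.single (a₁, a₂) (b₁, b₂) (1:ℂ) (x, a) (y, b) : Matrix n₂ n₂ ℂ)
        = (if x = a₁ ∧ y = b₁ then (1:ℂ) else 0) • Matrix.single a₂ b₂ 1 := by
      ext a b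
      by_cases h1 : x = a₁ <;> by_cases h2 : y = b₁ <;>
        simp [Matrix.single, Pi.single_apply, Prod.ext_iff, h1, h2] <;>
        aesop
    rw [harg, LinearMap.map_smul]
    simp only [Matrix.smul_apply, smul_eq_mul]
    rfl
  have harg2 : (Matrix.of fun x y =>
        matTensorMap (⇑E₂) (Matrix.single (a₁, a₂) (b₁, b₂) (1:ℂ)) (x, c₂) (y, d₂)
          : Matrix n₁ n₁ ℂ)
      = choi E₂ (a₂, c₂) (b₂, d₂) • Matrix.single a₁ b₁ 1 := by
    ext x y
    rw [Matrix.of_apply, hinner x y]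
    by_cases h1 : x = a₁ <;> by_cases h2 : y = b₁ <;>
      simp [Matrix.single, Pi.single_apply, h1, h2] <;>
      aesop
  rw [harg2, LinearMap.map_smul]
  simp only [Matrix.smul_apply, smul_eq_mul, Matrix.submatrix_apply,
    Equiv.prodProdProdComm_apply, Matrix.kroneckerMap_apply]
  rw [mul_comm]
  rfl

private lemma choi_posSemidef [Fintype n] [Fintype m] {E : Matrix n n ℂ →ₗ[ℂ] Matrix m m ℂ}
    (hE : IsCP E) : (choi E).PosSemidef := by
  set N := Fintype.card n with hN
  set e : Fin N ≃ n := (Fintype.equivFin n).symm with he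
  have hM : ((mes n).submatrix (fun p : Fin N × n => (e p.1, p.2))
      (fun p : Fin N × n => (e p.1, p.2))).PosSemidef :=
    (outer_posSemidef _).submatrix _
  have h2 := hE N _ hM
  have h3 : matTensorMap (⇑E) ((mes n).submatrix (fun p : Fin N × n => (e p.1, p.2))
        (fun p : Fin N × n => (e p.1, p.2)))
      = (matTensorMap (⇑E) (mes n)).submatrix (fun p : Fin N × m => (e p.1, p.2))
        (fun p : Fin N × m => (e p.1, p.2)) := by
    ext ⟨i, c⟩ ⟨j, d⟩
    rfl
  rw [h3, matTensorMap_mes] at h2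
  have h4 : ((choi E).submatrix (⇑(e.prodCongr (Equiv.refl m)))
      (⇑(e.prodCongr (Equiv.refl m)))).PosSemidef := h2
  exact (Matrix.posSemidef_submatrix_equiv _).mp h4

private lemma choi_trace [Fintype n] [Fintype m] {E : Matrix n n ℂ →ₗ[ℂ] Matrix m m ℂ}
    (hTP : IsTP E) : (choi E).trace = (Fintype.card n : ℂ) := by
  rw [Matrix.trace, Fintype.sum_prod_type]
  have h1 : ∀ a : n, ∑ c : m, Matrix.diag (choi E) (a, c) = 1 := by
    intro a
    have h2 := hTP (Matrix.single a a 1)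
    have h3 : (Matrix.single a a (1:ℂ)).trace = 1 := by
      simp [Matrix.trace, Matrix.diag, Matrix.single, Pi.single_apply,
        Finset.sum_ite_eq]
    rw [h3] at h2
    rw [← h2, Matrix.trace]
    rfl
  rw [Finset.sum_congr rfl fun a _ => h1 a]
  simp [Finset.card_univ]

private lemma DmaxChan_of_isEmpty [Fintype n] [Fintype m] (hn : IsEmpty n)
    (E F : Matrix n n ℂ →ₗ[ℂ] Matrix m m ℂ) : DmaxChan E F = ⊥ := by
  haveI := hn
  have hempty : IsEmpty {φ : Matrix (n × n) (n × n) ℂ // IsDensity φ} := by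
    constructor
    rintro ⟨φ, hφ, htr⟩
    have hz : φ.trace = 0 := by simp [Matrix.trace]
    rw [hz] at htr
    exact one_ne_zero htr.symm
  exact iSup_of_empty _

end AdditivityAux


/-- **Additivity of the channel max-relative entropy under tensor products:**
for trace-preserving completely positive `E₁, E₂` and completely positive `F₁, F₂`,
`D_max(E₁ ⊗ E₂ ‖ F₁ ⊗ F₂) = D_max(E₁‖F₁) + D_max(E₂‖F₂)`. -/
theorem DmaxChan_additive_tensor {n₁ n₂ m₁ m₂ : Type*}
    [Fintype n₁] [Fintype n₂] [Fintype m₁] [Fintype m₂]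
    (E₁ F₁ : Matrix n₁ n₁ ℂ →ₗ[ℂ] Matrix m₁ m₁ ℂ)
    (E₂ F₂ : Matrix n₂ n₂ ℂ →ₗ[ℂ] Matrix m₂ m₂ ℂ)
    (E₁₂ F₁₂ : Matrix (n₁ × n₂) (n₁ × n₂) ℂ →ₗ[ℂ] Matrix (m₁ × m₂) (m₁ × m₂) ℂ)
    (hE₁₂ : ∀ M, E₁₂ M = tensorChan (⇑E₁) (⇑E₂) M)
    (hF₁₂ : ∀ M, F₁₂ M = tensorChan (⇑F₁) (⇑F₂) M)
    (hE₁ : IsCP E₁) (hE₁TP : IsTP E₁) (hF₁ : IsCP F₁)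
    (hE₂ : IsCP E₂) (hE₂TP : IsTP E₂) (hF₂ : IsCP F₂) :
    DmaxChan E₁₂ F₁₂ = DmaxChan E₁ F₁ + DmaxChan E₂ F₂ := by
  by_cases hn₁ : Nonempty n₁
  · by_cases hn₂ : Nonempty n₂
    · haveI := hn₁
      haveI := hn₂
      rw [DmaxChan_eq_choi E₁₂ F₁₂, DmaxChan_eq_choi E₁ F₁, DmaxChan_eq_choi E₂ F₂,
        choi_tensor E₁ E₂ E₁₂ hE₁₂, choi_tensor F₁ F₂ F₁₂ hF₁₂, Dmax_submatrix]
      have htr₁ : 0 < (choi E₁).trace.re := by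
        rw [choi_trace hE₁TP]
        simp only [Complex.natCast_re]
        exact_mod_cast Fintype.card_pos
      have htr₂ : 0 < (choi E₂).trace.re := by
        rw [choi_trace hE₂TP]
        simp only [Complex.natCast_re]
        exact_mod_cast Fintype.card_pos
      exact Dmax_kron_add (choi_posSemidef hE₁) (choi_posSemidef hE₂)
        (choi_posSemidef hF₁) (choi_posSemidef hF₂) htr₁ htr₂
    · have h2 : IsEmpty n₂ := not_nonempty_iff.mp hn₂
      have h12 : IsEmpty (n₁ × n₂) := ⟨fun p => h2.false p.2⟩
      rw [DmaxChan_of_isEmpty h2 E₂ F₂, DmaxChan_of_isEmpty h12 E₁₂ F₁₂, EReal.add_bot]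
  · have h1 : IsEmpty n₁ := not_nonempty_iff.mp hn₁
    have h12 : IsEmpty (n₁ × n₂) := ⟨fun p => h1.false p.1⟩
    rw [DmaxChan_of_isEmpty h1 E₁ F₁, DmaxChan_of_isEmpty h12 E₁₂ F₁₂, EReal.bot_add]

end QIT
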